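/- arXiv:1905.10177 — 11 statements merged into one kernel-verified Lean document; each statement's English description precedes it below -/
import Mathlib

section
/- Suppose Ψ₂ is an index function such that (1/α)(T_α(x†) − T_α(x_α)) ≤ Ψ₂(α) for all α > 0, where x_α is a minimizer of T_α for each α > 0. Then J(x†) − J(x_α) ≤ 2 Ψ₂(2α) for all α > 0 (Theorem 1, implication (b) ⇒ (a), with the converted index function). -/
/-- An index function: nondecreasing on `(0,∞)`, nonnegative there,
tending to `0` as `t → 0⁺`. -/
def IsIndexFun (Ψ : ℝ → ℝ) : Prop :=
  MonotoneOn Ψ (Set.Ioi 0) ∧ (∀ t > 0, 0 ≤ Ψ t) ∧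
    Filter.Tendsto Ψ (nhdsWithin 0 (Set.Ioi 0)) (nhds 0)

/-- Theorem 1, (b) ⇒ (a): a `T`-rate `Ψ₂` yields the `J`-rate `α ↦ 2 Ψ₂(2α)`. -/
theorem stmt1 {X H : Type*} [NormedAddCommGroup X] [NormedSpace ℝ X] [CompleteSpace X]
    [NormedAddCommGroup H] [InnerProductSpace ℝ H] [CompleteSpace H]
    (A : X →L[ℝ] H) (J : X → ℝ) (hJ : ConvexOn ℝ Set.univ J) (xdag : X)
    (T : ℝ → X → ℝ)
    (hT : ∀ α x, T α x = (1 / 2) * ‖A x - A xdag‖ ^ 2 + α * J x)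
    (xa : ℝ → X) (hmin : ∀ α > 0, ∀ x, T α (xa α) ≤ T α x)
    (Ψ₂ : ℝ → ℝ) (hΨ₂ : IsIndexFun Ψ₂)
    (hrate : ∀ α > 0, (1 / α) * (T α xdag - T α (xa α)) ≤ Ψ₂ α) :
    ∀ α > 0, J xdag - J (xa α) ≤ 2 * Ψ₂ (2 * α) := by
  intro α hα
  have hβ : (0:ℝ) < 2 * α := by linarith
  have h1 := hrate (2 * α) hβ
  have h2 := hmin (2 * α) hβ (xa α)
  have h3 := hmin α hα xdag
  simp only [hT, sub_self, norm_zero] at h1 h2 h3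
  rw [one_div, inv_mul_le_iff₀ hβ] at h1
  have hn : (0:ℝ) ≤ ‖A (xa α) - A xdag‖ ^ 2 := by positivity
  have hn2 : (0:ℝ) ≤ ‖A (xa (2 * α)) - A xdag‖ ^ 2 := by positivity
  nlinarith [h1, h2, h3]
end

section
/- Suppose Ψ₂ is an index function such that (1/α)(T_α(x†) − T_α(x_α)) ≤ Ψ₂(α) for all α > 0, where x_α is a minimizer of T_α for each α > 0. Then the variational inequality holds: for every x ∈ X and every t > 0, J(x†) − J(x) ≤ Ψ₂(t) + ‖A x − A x†‖²/(2t); in particular J(x†) − J(x) ≤ inf_{t>0} (Ψ₂(t) + ‖A x − A x†‖²/(2t)) (Theorem 1, implication (b) ⇒ (c)). -/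
/-- Theorem 1, (b) ⇒ (c): a `T`-rate `Ψ₂` yields the variational inequality
`J(x†) − J(x) ≤ Ψ₂(t) + ‖Ax − Ax†‖²/(2t)` for all `t > 0`, hence with the infimum
over `t > 0` on the right-hand side. -/
theorem stmt2 {X H : Type*} [NormedAddCommGroup X] [NormedSpace ℝ X] [CompleteSpace X]
    [NormedAddCommGroup H] [InnerProductSpace ℝ H] [CompleteSpace H]
    (A : X →L[ℝ] H) (J : X → ℝ) (hJ : ConvexOn ℝ Set.univ J) (xdag : X)
    (T : ℝ → X → ℝ)
    (hT : ∀ α x, T α x = (1 / 2) * ‖A x - A xdag‖ ^ 2 + α * J x)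
    (xa : ℝ → X) (hmin : ∀ α > 0, ∀ x, T α (xa α) ≤ T α x)
    (Ψ₂ : ℝ → ℝ) (hΨ₂ : IsIndexFun Ψ₂)
    (hrate : ∀ α > 0, (1 / α) * (T α xdag - T α (xa α)) ≤ Ψ₂ α) :
    (∀ x : X, ∀ t > 0, J xdag - J x ≤ Ψ₂ t + ‖A x - A xdag‖ ^ 2 / (2 * t)) ∧
      (∀ x : X, J xdag - J x ≤
        ⨅ t : Set.Ioi (0 : ℝ), (Ψ₂ t + ‖A x - A xdag‖ ^ 2 / (2 * (t : ℝ)))) := by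
  have key : ∀ x : X, ∀ t > 0, J xdag - J x ≤ Ψ₂ t + ‖A x - A xdag‖ ^ 2 / (2 * t) := by
    intro x t ht
    have h1 := hrate t ht
    have h2 := hmin t ht x
    rw [hT t xdag, hT t (xa t)] at h1
    rw [hT t (xa t), hT t x] at h2
    have ht' : (0:ℝ) < t := ht
    have hs : ‖A xdag - A xdag‖ ^ 2 = 0 := by simp
    rw [hs] at h1
    have h1' : t * J xdag - (1 / 2 * ‖A (xa t) - A xdag‖ ^ 2 + t * J (xa t)) ≤ t * Ψ₂ t := by
      have := mul_le_mul_of_nonneg_left h1 ht'.le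
      calc t * J xdag - (1 / 2 * ‖A (xa t) - A xdag‖ ^ 2 + t * J (xa t))
          = t * (1 / t * (1 / 2 * 0 + t * J xdag - (1 / 2 * ‖A (xa t) - A xdag‖ ^ 2 + t * J (xa t)))) := by
            field_simp; ring
        _ ≤ t * Ψ₂ t := this
    have hgoal : t * (J xdag - J x) ≤ t * Ψ₂ t + ‖A x - A xdag‖ ^ 2 / 2 := by
      nlinarith [h1', h2]
    have h3 : J xdag - J x ≤ (t * Ψ₂ t + ‖A x - A xdag‖ ^ 2 / 2) / t := by
      rw [le_div_iff₀ ht']; nlinarith [hgoal]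
    have heq : (t * Ψ₂ t + ‖A x - A xdag‖ ^ 2 / 2) / t
        = Ψ₂ t + ‖A x - A xdag‖ ^ 2 / (2 * t) := by
      field_simp
    linarith [h3, heq.le, heq.ge]
  refine ⟨key, fun x => le_ciInf fun ⟨t, ht⟩ => key x t ht⟩
end

section
/- Suppose Φ₃ : [0,∞) → [0,∞) satisfies the variational inequality J(x†) − J(x) ≤ Φ₃(‖A x − A x†‖) for all x ∈ X. Then for every α > 0 and every minimizer x_α of T_α, (1/α)(T_α(x†) − T_α(x_α)) ≤ Φ₃(‖A x_α − A x†‖) − ‖A x_α − A x†‖²/(2α); in particular, (1/α)(T_α(x†) − T_α(x_α)) ≤ sup_{t ≥ 0} (Φ₃(t) − t²/(2α)) whenever this supremum is finite (Theorem 1, implication (c) ⇒ (b)). -/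
/-- Theorem 1, (c) ⇒ (b): the variational inequality with `Φ₃` yields the `T`-rate
`(1/α)(T_α(x†) − T_α(x_α)) ≤ Φ₃(‖Ax_α − Ax†‖) − ‖Ax_α − Ax†‖²/(2α)`, and in particular
the bound by `sup_{t ≥ 0} (Φ₃(t) − t²/(2α))` whenever that supremum is finite. -/
theorem stmt3 {X H : Type*} [NormedAddCommGroup X] [NormedSpace ℝ X] [CompleteSpace X]
    [NormedAddCommGroup H] [InnerProductSpace ℝ H] [CompleteSpace H]
    (A : X →L[ℝ] H) (J : X → ℝ) (hJ : ConvexOn ℝ Set.univ J) (xdag : X)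
    (T : ℝ → X → ℝ)
    (hT : ∀ α x, T α x = (1 / 2) * ‖A x - A xdag‖ ^ 2 + α * J x)
    (Φ₃ : ℝ → ℝ) (hΦnn : ∀ t ≥ 0, 0 ≤ Φ₃ t)
    (hvar : ∀ x : X, J xdag - J x ≤ Φ₃ ‖A x - A xdag‖) :
    ∀ α > 0, ∀ xa : X, (∀ x, T α xa ≤ T α x) →
      ((1 / α) * (T α xdag - T α xa) ≤
          Φ₃ ‖A xa - A xdag‖ - ‖A xa - A xdag‖ ^ 2 / (2 * α)) ∧
        (BddAbove ((fun t => Φ₃ t - t ^ 2 / (2 * α)) '' Set.Ici 0) →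
          (1 / α) * (T α xdag - T α xa) ≤
            sSup ((fun t => Φ₃ t - t ^ 2 / (2 * α)) '' Set.Ici 0)) := by
  intro α hα xa _hmin
  have hkey : (1 / α) * (T α xdag - T α xa) ≤
      Φ₃ ‖A xa - A xdag‖ - ‖A xa - A xdag‖ ^ 2 / (2 * α) := by
    have h1 : T α xdag = α * J xdag := by
      rw [hT]; simp
    have h2 : T α xa = (1 / 2) * ‖A xa - A xdag‖ ^ 2 + α * J xa := hT α xa
    have hv := hvar xa
    rw [h1, h2]
    have : (1 / α) * (α * J xdag - ((1 / 2) * ‖A xa - A xdag‖ ^ 2 + α * J xa))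
        = (J xdag - J xa) - ‖A xa - A xdag‖ ^ 2 / (2 * α) := by
      field_simp
      ring
    rw [this]
    linarith
  refine ⟨hkey, fun hbdd => ?_⟩
  refine hkey.trans (le_csSup hbdd ?_)
  exact ⟨‖A xa - A xdag‖, norm_nonneg _, rfl⟩
end

section
/- Weak duality for the Tikhonov functional: let x* ∈ ∂J(x†) and let J*(p) := sup_{x ∈ X} (p(x) − J(x)) denote the Fenchel conjugate of J. Then for every α > 0, every z ∈ H with J*(A* z) < ∞, and every minimizer x_α of T_α, (1/α)(T_α(x†) − T_α(x_α)) ≤ J*(A* z) − J*(x*) − (A* z − x*)(x†) + (α/2)‖z‖². In particular, if Ψ₅ is an index function such that for every α > 0 there exists z ∈ H with J*(A* z) − J*(x*) − (A* z − x*)(x†) + (α/2)‖z‖² ≤ Ψ₅(α), then (1/α)(T_α(x†) − T_α(x_α)) ≤ Ψ₅(α) for all α > 0 (Theorem 1, implication (e) ⇒ (b)). -/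
/-- Theorem 1, (e) ⇒ (b): weak duality for the Tikhonov functional. With `x* ∈ ∂J(x†)`
and the Fenchel conjugate `J*(p) = sup_x (p(x) − J(x))`, for every `α > 0`, every `z ∈ H`
with `J*(A*z) < ∞` (i.e. the defining supremum is bounded above) and every minimizer `x_α`
of `T_α` one has
`(1/α)(T_α(x†) − T_α(x_α)) ≤ J*(A*z) − J*(x*) − (A*z − x*)(x†) + (α/2)‖z‖²`.
In particular a dual `T`-rate `Ψ₅` is a `T`-rate. -/
theorem stmt6 {X H : Type*} [NormedAddCommGroup X] [NormedSpace ℝ X] [CompleteSpace X]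
    [NormedAddCommGroup H] [InnerProductSpace ℝ H] [CompleteSpace H]
    (A : X →L[ℝ] H) (J : X → ℝ) (hJ : ConvexOn ℝ Set.univ J) (xdag : X)
    (T : ℝ → X → ℝ)
    (hT : ∀ α x, T α x = (1 / 2) * ‖A x - A xdag‖ ^ 2 + α * J x)
    (xstar : X →L[ℝ] ℝ) (hxstar : ∀ z : X, J xdag + xstar (z - xdag) ≤ J z)
    (Astar : H → X →L[ℝ] ℝ) (hAstar : ∀ v x, Astar v x = (inner ℝ v (A x) : ℝ))
    (Jstar : (X →L[ℝ] ℝ) → ℝ)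
    (hJstar : ∀ p, Jstar p = sSup (Set.range fun x => p x - J x)) :
    (∀ α > 0, ∀ z : H, BddAbove (Set.range fun x => Astar z x - J x) →
      ∀ xa : X, (∀ x, T α xa ≤ T α x) →
        (1 / α) * (T α xdag - T α xa) ≤
          Jstar (Astar z) - Jstar xstar - (Astar z - xstar) xdag + (α / 2) * ‖z‖ ^ 2) ∧
      (∀ Ψ₅ : ℝ → ℝ, IsIndexFun Ψ₅ →
        (∀ α > 0, ∃ z : H, BddAbove (Set.range fun x => Astar z x - J x) ∧
          Jstar (Astar z) - Jstar xstar - (Astar z - xstar) xdag + (α / 2) * ‖z‖ ^ 2 ≤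
            Ψ₅ α) →
        ∀ α > 0, ∀ xa : X, (∀ x, T α xa ≤ T α x) →
          (1 / α) * (T α xdag - T α xa) ≤ Ψ₅ α) := by
  have key : ∀ α > 0, ∀ z : H, BddAbove (Set.range fun x => Astar z x - J x) →
      ∀ xa : X,
        (1 / α) * (T α xdag - T α xa) ≤
          Jstar (Astar z) - Jstar xstar - (Astar z - xstar) xdag + (α / 2) * ‖z‖ ^ 2 := by
    intro α hα z hz xa
    -- J*(x*) = x*(x†) - J(x†)
    have hub : ∀ x : X, xstar x - J x ≤ xstar xdag - J xdag := by
      intro x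
      have := hxstar x
      rw [map_sub] at this
      linarith
    have hJs_xstar : Jstar xstar = xstar xdag - J xdag := by
      rw [hJstar]
      apply IsGreatest.csSup_eq
      exact ⟨⟨xdag, rfl⟩, by rintro _ ⟨x, rfl⟩; exact hub x⟩
    -- J*(A*z) ≥ ⟨z, A xa⟩ - J xa
    have hJsz : (inner ℝ z (A xa) : ℝ) - J xa ≤ Jstar (Astar z) := by
      rw [hJstar, ← hAstar]
      exact le_csSup hz ⟨xa, rfl⟩
    -- square nonneg
    have hsq : (0:ℝ) ≤ ‖(A xa - A xdag) + α • z‖ ^ 2 := sq_nonneg _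
    have hexp : ‖(A xa - A xdag) + α • z‖ ^ 2 =
        ‖A xa - A xdag‖ ^ 2 + 2 * (α * ((inner ℝ z (A xa) : ℝ) - (inner ℝ z (A xdag) : ℝ)))
          + α ^ 2 * ‖z‖ ^ 2 := by
      rw [norm_add_sq_real, real_inner_smul_right, norm_smul, real_inner_comm,
        inner_sub_right]
      rw [mul_pow, Real.norm_eq_abs, sq_abs]
    rw [hexp] at hsq
    have hAz : (Astar z) xdag = (inner ℝ z (A xdag) : ℝ) := hAstar z xdag
    have hT1 : T α xdag = α * J xdag := by rw [hT]; simp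
    have hT2 : T α xa = (1 / 2) * ‖A xa - A xdag‖ ^ 2 + α * J xa := hT α xa
    rw [hT1, hT2, hJs_xstar, ContinuousLinearMap.sub_apply, hAz]
    rw [div_mul_eq_mul_div, div_le_iff₀ hα]
    nlinarith [mul_le_mul_of_nonneg_left hJsz (le_of_lt hα)]
  refine ⟨fun α hα z hz xa _ => key α hα z hz xa, ?_⟩
  intro Ψ₅ _ hdual α hα xa _
  obtain ⟨z, hz, hle⟩ := hdual α hα
  exact le_trans (key α hα z hz xa) hle
end

section
/- The T-rate implies a KL inequality (Theorem 4, (b) ⇒ (a)): let Ψ be an index function such that T_α(x†) − T_α(x_α) ≤ α Ψ(α) for all α > 0, and assume the function Θ̄(t) := Ψ(1/t)/t is a strictly decreasing continuous bijection of (0,∞) onto (0,∞) with inverse g := Θ̄⁻¹. Then g is strictly decreasing (hence nonincreasing), and for every α > 0 with T_α(x†) − T_α(x_α) > 0 one has g(T_α(x†) − T_α(x_α)) · α ≥ 1; in particular, with s := inf{‖q‖_{X*} : q ∈ ∂J(x†)}, g(T_α(x†) − T_α(x_α)) · α s ≥ s, which is the KL inequality with desingularizing slope g and constant k = 1/s.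 -/
/-- The subdifferential of `F : X → ℝ` at `x`:
`∂F(x) = {p ∈ X* : F(z) ≥ F(x) + p(z − x) for all z}`. -/
def SubDiff {X : Type*} [NormedAddCommGroup X] [NormedSpace ℝ X] (F : X → ℝ) (x : X) :
    Set (X →L[ℝ] ℝ) :=
  {p | ∀ z, F x + p (z - x) ≤ F z}

/-- Theorem 4, (b) ⇒ (a): the `T`-rate `T_α(x†) − T_α(x_α) ≤ α Ψ(α)` implies a KL
inequality. Assume `Θ̄(t) = Ψ(1/t)/t` is a strictly decreasing continuous bijection of
`(0,∞)` onto itself with inverse `g`. Then `g` is strictly decreasing on `(0,∞)` and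
`g(T_α(x†) − T_α(x_α)) · α ≥ 1` whenever `T_α(x†) − T_α(x_α) > 0`; in particular, with
`s = inf{‖q‖ : q ∈ ∂J(x†)}`, one gets `g(T_α(x†) − T_α(x_α)) · α s ≥ s`, the KL
inequality with slope `g` and constant `k = 1/s`. -/
theorem stmt9 {X H : Type*} [NormedAddCommGroup X] [NormedSpace ℝ X] [CompleteSpace X]
    [NormedAddCommGroup H] [InnerProductSpace ℝ H] [CompleteSpace H]
    (A : X →L[ℝ] H) (J : X → ℝ) (hJ : ConvexOn ℝ Set.univ J) (xdag : X)
    (T : ℝ → X → ℝ)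
    (hT : ∀ α x, T α x = (1 / 2) * ‖A x - A xdag‖ ^ 2 + α * J x)
    (xa : ℝ → X) (hmin : ∀ α > 0, ∀ x, T α (xa α) ≤ T α x)
    (Ψ : ℝ → ℝ) (hΨ : IsIndexFun Ψ)
    (hrate : ∀ α > 0, T α xdag - T α (xa α) ≤ α * Ψ α)
    (Θbar : ℝ → ℝ) (hΘbar : ∀ t > 0, Θbar t = Ψ (1 / t) / t)
    (hΘanti : StrictAntiOn Θbar (Set.Ioi 0))
    (hΘcont : ContinuousOn Θbar (Set.Ioi 0))
    (hΘpos : ∀ t > 0, 0 < Θbar t)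
    (g : ℝ → ℝ) (hgpos : ∀ u > 0, 0 < g u)
    (hg_right : ∀ u > 0, Θbar (g u) = u)
    (hg_left : ∀ t > 0, g (Θbar t) = t)
    (s : ℝ) (hs : s = sInf (norm '' SubDiff J xdag)) :
    StrictAntiOn g (Set.Ioi 0) ∧
      ∀ α > 0, 0 < T α xdag - T α (xa α) →
        g (T α xdag - T α (xa α)) * α ≥ 1 ∧
          g (T α xdag - T α (xa α)) * α * s ≥ s := by
  have hganti : StrictAntiOn g (Set.Ioi 0) := by
    intro u1 h1 u2 h2 h12
    by_contra hle
    push_neg at hle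
    have hg1 := hgpos u1 h1
    have hg2 := hgpos u2 h2
    rcases lt_or_eq_of_le hle with hlt | heq
    · have := hΘanti hg1 hg2 hlt
      rw [hg_right u1 h1, hg_right u2 h2] at this
      exact absurd h12 (not_lt.mpr this.le)
    · have : u2 = u1 := by
        rw [← hg_right u2 h2, ← hg_right u1 h1, heq]
      exact absurd h12 (by simp [this])
  refine ⟨hganti, fun α hα hd => ?_⟩
  set d := T α xdag - T α (xa α) with hdd
  have hinv : (0:ℝ) < 1 / α := by positivity
  have hΘval : Θbar (1 / α) = α * Ψ α := by
    rw [hΘbar (1/α) hinv, one_div_one_div]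
    field_simp
  have hdle : d ≤ Θbar (1 / α) := by rw [hΘval]; exact hrate α hα
  have hgd : 1 / α ≤ g d := by
    have := hganti.antitoneOn (Set.mem_Ioi.mpr hd)
      (Set.mem_Ioi.mpr (hΘpos _ hinv)) hdle
    rwa [hg_left _ hinv] at this
  have h1 : g d * α ≥ 1 := by
    have := mul_le_mul_of_nonneg_right hgd (le_of_lt hα)
    rwa [one_div, inv_mul_cancel₀ (ne_of_gt hα)] at this
  have hs0 : 0 ≤ s := by
    rw [hs]
    apply Real.sInf_nonneg
    rintro x ⟨q, -, rfl⟩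
    exact norm_nonneg q
  exact ⟨h1, by calc s = 1 * s := (one_mul s).symm
                  _ ≤ g d * α * s := mul_le_mul_of_nonneg_right h1 hs0⟩
end

section
/- Bregman rate under the variational inequality (Theorem 2, part 1): suppose Φ : [0,∞) → [0,∞) is a concave index function with J(x†) − J(x) ≤ Φ(‖A x − A x†‖) for all x ∈ X, and let Ψ(α) := sup_{t ≥ 0} (Φ(t) − t²/(2α)), assumed finite for each α > 0. Then the element ξ_α^δ := −(1/α) A*(A x_α^δ − y^δ) belongs to ∂J(x_α^δ), and there exists a constant C > 0 (independent of α and δ) such that for all α > 0 and δ > 0, the Bregman distance B_{ξ_α^δ}(x_α^δ, x†) := J(x†) − J(x_α^δ) − ξ_α^δ(x† − x_α^δ) satisfies B_{ξ_α^δ}(x_α^δ, x†) ≤ C (δ²/α + Ψ(α)). -/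
set_option maxHeartbeats 1000000 in
/-- Theorem 2, part 1 (Bregman rate): under the variational inequality with a concave
index function `Φ` and with `Ψ(α) = sup_{t ≥ 0} (Φ(t) − t²/(2α))` (assumed finite), the
element `ξ_α^δ = −(1/α) A*(A x_α^δ − y^δ)` is a subgradient of `J` at the minimizer
`x_α^δ` of the noisy Tikhonov functional, and there is a constant `C > 0` with
`B_{ξ_α^δ}(x_α^δ, x†) ≤ C (δ²/α + Ψ(α))` for all `α, δ > 0`. -/
theorem stmt11 {X H : Type*} [NormedAddCommGroup X] [NormedSpace ℝ X] [CompleteSpace X]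
    [NormedAddCommGroup H] [InnerProductSpace ℝ H] [CompleteSpace H]
    (A : X →L[ℝ] H) (J : X → ℝ) (hJ : ConvexOn ℝ Set.univ J) (xdag : X)
    (Astar : H → X →L[ℝ] ℝ) (hAstar : ∀ v x, Astar v x = (inner ℝ v (A x) : ℝ))
    (Φ : ℝ → ℝ) (hΦconc : ConcaveOn ℝ (Set.Ici 0) Φ)
    (hΦmono : MonotoneOn Φ (Set.Ici 0)) (hΦnn : ∀ t ≥ 0, 0 ≤ Φ t) (hΦ0 : Φ 0 = 0)
    (hΦcont0 : ContinuousWithinAt Φ (Set.Ici 0) 0)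
    (hvar : ∀ x : X, J xdag - J x ≤ Φ ‖A x - A xdag‖)
    (Ψ : ℝ → ℝ)
    (hbdd : ∀ α > 0, BddAbove ((fun t => Φ t - t ^ 2 / (2 * α)) '' Set.Ici 0))
    (hΨ : ∀ α > 0, Ψ α = sSup ((fun t => Φ t - t ^ 2 / (2 * α)) '' Set.Ici 0)) :
    ∃ C > 0, ∀ α > 0, ∀ δ > 0, ∀ yδ : H, ‖A xdag - yδ‖ ≤ δ →
      ∀ xad : X,
        (∀ x, (1 / 2) * ‖A xad - yδ‖ ^ 2 + α * J xad ≤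
          (1 / 2) * ‖A x - yδ‖ ^ 2 + α * J x) →
        ((-(1 / α)) • Astar (A xad - yδ)) ∈ SubDiff J xad ∧
          J xdag - J xad - ((-(1 / α)) • Astar (A xad - yδ)) (xdag - xad) ≤
            C * (δ ^ 2 / α + Ψ α) := by
  refine ⟨3, by norm_num, ?_⟩
  intro α hα δ hδ yδ hyδ xad hmin
  set u : H := A xad - yδ with hu
  have hval : ∀ w : X, ((-(1 / α)) • Astar u) w = -(1 / α) * (inner ℝ u (A w) : ℝ) := by
    intro w
    simp [hAstar, smul_eq_mul]
  constructor
  · intro z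
    rw [hval]
    have key : (0 : ℝ) ≤ (inner ℝ u (A (z - xad)) : ℝ) + α * (J z - J xad) := by
      apply le_of_forall_pos_le_add
      intro ε hε
      set k : ℝ := ‖A (z - xad)‖ ^ 2 with hk
      have hknn : 0 ≤ k := sq_nonneg _
      set t : ℝ := min 1 (2 * ε / (k + 1)) with ht
      have ht0 : 0 < t := lt_min one_pos (by positivity)
      have ht1 : t ≤ 1 := min_le_left _ _
      have hmin' := hmin (xad + t • (z - xad))
      have hAeq : A (xad + t • (z - xad)) - yδ = u + t • A (z - xad) := by
        simp [map_add, map_smul, hu]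
        abel
      have hconv : J (xad + t • (z - xad)) ≤ (1 - t) * J xad + t * J z := by
        have h := hJ.2 (Set.mem_univ xad) (Set.mem_univ z)
          (by linarith : (0:ℝ) ≤ 1 - t) ht0.le (by ring)
        have heq : xad + t • (z - xad) = (1 - t) • xad + t • z := by module
        rw [heq]
        exact h
      have hexp : ‖u + t • A (z - xad)‖ ^ 2 =
          ‖u‖ ^ 2 + 2 * (t * (inner ℝ u (A (z - xad)) : ℝ)) + t ^ 2 * k := by
        rw [norm_add_sq_real, real_inner_smul_right, norm_smul, Real.norm_eq_abs,
          abs_of_pos ht0, mul_pow]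
      rw [hAeq] at hmin'
      have hconv' : α * J (xad + t • (z - xad)) ≤ α * ((1 - t) * J xad + t * J z) :=
        mul_le_mul_of_nonneg_left hconv hα.le
      have h3 : 0 ≤ t * ((inner ℝ u (A (z - xad)) : ℝ) + α * (J z - J xad)) + t ^ 2 / 2 * k := by
        nlinarith [hmin', hconv', hexp]
      have h5 : 0 ≤ (inner ℝ u (A (z - xad)) : ℝ) + α * (J z - J xad) + t * k / 2 := by
        nlinarith [h3, ht0]
      have ht2 : t * (k + 1) ≤ 2 * ε := by
        have := min_le_right 1 (2 * ε / (k + 1))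
        rw [ht]
        calc t * (k + 1) ≤ (2 * ε / (k + 1)) * (k + 1) := by
              apply mul_le_mul_of_nonneg_right (min_le_right _ _) (by positivity)
          _ = 2 * ε := by field_simp
      nlinarith [h5, ht2, ht0.le]
    have h6 : -((inner ℝ u (A (z - xad)) : ℝ) / α) ≤ J z - J xad := by
      rw [neg_le, le_div_iff₀ hα]
      nlinarith [key]
    have hpe : -(1 / α) * (inner ℝ u (A (z - xad)) : ℝ) = -((inner ℝ u (A (z - xad)) : ℝ) / α) := by
      ring
    rw [hpe]
    linarith [h6]
  · rw [hval]
    set r : ℝ := ‖u‖ with hr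
    set ip : ℝ := inner ℝ u (A xdag - yδ) with hip
    set tt : ℝ := ‖A xad - A xdag‖ with htt
    have hinner : (inner ℝ u (A (xdag - xad)) : ℝ) = ip - r ^ 2 := by
      rw [map_sub]
      have heq : A xdag - A xad = (A xdag - yδ) - u := by rw [hu]; abel
      rw [heq, inner_sub_right, real_inner_self_eq_norm_sq]
    have hipb : ip ≤ r * δ := by
      calc ip ≤ ‖u‖ * ‖A xdag - yδ‖ := real_inner_le_norm _ _
        _ ≤ r * δ := mul_le_mul_of_nonneg_left hyδ (norm_nonneg u)
    have htb : tt ≤ r + δ := by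
      have heq : A xad - A xdag = u - (A xdag - yδ) := by rw [hu]; abel
      rw [htt, heq]
      exact (norm_sub_le _ _).trans (by linarith [hyδ])
    have htts : tt ^ 2 ≤ (r + δ) ^ 2 := by
      apply pow_le_pow_left₀ (norm_nonneg _) htb
    have hΦt : Φ tt - tt ^ 2 / (2 * α) ≤ Ψ α := by
      rw [hΨ α hα]
      exact le_csSup (hbdd α hα) ⟨tt, norm_nonneg _, rfl⟩
    have hΨ0 : 0 ≤ Ψ α := by
      rw [hΨ α hα]
      have hmem : Φ 0 - 0 ^ 2 / (2 * α) ≤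
          sSup ((fun t => Φ t - t ^ 2 / (2 * α)) '' Set.Ici 0) :=
        le_csSup (hbdd α hα) ⟨0, Set.self_mem_Ici, rfl⟩
      have h0 : Φ 0 - 0 ^ 2 / (2 * α) = 0 := by rw [hΦ0]; ring
      linarith [hmem]
    have hJb : J xdag - J xad ≤ Φ tt := hvar xad
    have h7 : J xdag - J xad ≤ Ψ α + tt ^ 2 / 2 * (1 / α) := by
      have heq : tt ^ 2 / (2 * α) = tt ^ 2 / 2 * (1 / α) := by ring
      linarith [heq ▸ hΦt]
    have hiα : (0:ℝ) < 1 / α := by positivity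
    rw [hinner]
    have e1 : tt ^ 2 * (1 / α) ≤ (r + δ) ^ 2 * (1 / α) :=
      mul_le_mul_of_nonneg_right htts hiα.le
    have e2 : ip * (1 / α) ≤ r * δ * (1 / α) :=
      mul_le_mul_of_nonneg_right hipb hiα.le
    have e3 : 0 ≤ (r - 2 * δ) ^ 2 * (1 / α) := mul_nonneg (sq_nonneg _) hiα.le
    have e4 : 0 ≤ δ ^ 2 * (1 / α) := mul_nonneg (sq_nonneg _) hiα.le
    have egoal : J xdag - J xad - -(1 / α) * (ip - r ^ 2) =
        (J xdag - J xad) + ip * (1 / α) - r ^ 2 * (1 / α) := by ring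
    have egd : 3 * (δ ^ 2 / α + Ψ α) = 3 * (δ ^ 2 * (1 / α)) + 3 * Ψ α := by ring
    have eh7 : J xdag - J xad ≤ Ψ α + (tt ^ 2 * (1 / α)) / 2 := by linarith [h7]
    rw [egoal, egd]
    nlinarith [eh7, e1, e2, e3, e4, hΨ0]
end

section
/- Strict metric rate under the variational inequality (Theorem 2, part 2): suppose Φ : [0,∞) → [0,∞) is a concave index function with J(x†) − J(x) ≤ Φ(‖A x − A x†‖) for all x ∈ X, and let Ψ(α) := sup_{t ≥ 0} (Φ(t) − t²/(2α)), assumed finite for each α > 0. Then there exists a constant C > 0 (independent of α and δ) such that for all α > 0 and δ > 0: |J(x†) − J(x_α^δ)| ≤ C (Ψ(α) + δ²/α) and ‖A x_α^δ − A x†‖² ≤ C (α Ψ(α) + δ²). -/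
set_option maxHeartbeats 1600000 in
/-- Theorem 2, part 2 (strict metric rate): under the variational inequality with a
concave index function `Φ` and with `Ψ(α) = sup_{t ≥ 0} (Φ(t) − t²/(2α))` (assumed
finite), there is a constant `C > 0` such that for all `α, δ > 0` and every minimizer
`x_α^δ` of the noisy Tikhonov functional,
`|J(x†) − J(x_α^δ)| ≤ C (Ψ(α) + δ²/α)` and `‖A x_α^δ − A x†‖² ≤ C (α Ψ(α) + δ²)`. -/
theorem stmt12 {X H : Type*} [NormedAddCommGroup X] [NormedSpace ℝ X] [CompleteSpace X]
    [NormedAddCommGroup H] [InnerProductSpace ℝ H] [CompleteSpace H]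
    (A : X →L[ℝ] H) (J : X → ℝ) (hJ : ConvexOn ℝ Set.univ J) (xdag : X)
    (Φ : ℝ → ℝ) (hΦconc : ConcaveOn ℝ (Set.Ici 0) Φ)
    (hΦmono : MonotoneOn Φ (Set.Ici 0)) (hΦnn : ∀ t ≥ 0, 0 ≤ Φ t) (hΦ0 : Φ 0 = 0)
    (hΦcont0 : ContinuousWithinAt Φ (Set.Ici 0) 0)
    (hvar : ∀ x : X, J xdag - J x ≤ Φ ‖A x - A xdag‖)
    (Ψ : ℝ → ℝ)
    (hbdd : ∀ α > 0, BddAbove ((fun t => Φ t - t ^ 2 / (2 * α)) '' Set.Ici 0))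
    (hΨ : ∀ α > 0, Ψ α = sSup ((fun t => Φ t - t ^ 2 / (2 * α)) '' Set.Ici 0)) :
    ∃ C > 0, ∀ α > 0, ∀ δ > 0, ∀ yδ : H, ‖A xdag - yδ‖ ≤ δ →
      ∀ xad : X,
        (∀ x, (1 / 2) * ‖A xad - yδ‖ ^ 2 + α * J xad ≤
          (1 / 2) * ‖A x - yδ‖ ^ 2 + α * J x) →
        |J xdag - J xad| ≤ C * (Ψ α + δ ^ 2 / α) ∧
          ‖A xad - A xdag‖ ^ 2 ≤ C * (α * Ψ α + δ ^ 2) := by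
  refine ⟨32, by norm_num, ?_⟩
  intro α hα δ hδ yδ hyδ xad hmin
  -- key sup bound: Φ t ≤ Ψ α + t²/(2α) for t ≥ 0
  have key : ∀ t : ℝ, 0 ≤ t → Φ t ≤ Ψ α + t ^ 2 / (2 * α) := by
    intro t ht
    have h := le_csSup (hbdd α hα) (Set.mem_image_of_mem _ (show t ∈ Set.Ici 0 from ht))
    rw [← hΨ α hα] at h
    linarith
  have hΨ0 : 0 ≤ Ψ α := by
    have h := le_csSup (hbdd α hα) (Set.mem_image_of_mem _ (Set.mem_Ici.mpr (le_refl (0:ℝ))))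
    rw [← hΨ α hα] at h
    simp [hΦ0] at h
    linarith
  -- concavity scaling: Φ u ≤ 4 Φ (u/4) for u ≥ 0
  have quarter : ∀ u : ℝ, 0 ≤ u → Φ u ≤ 4 * Φ (u / 4) := by
    intro u hu
    have h := hΦconc.2 (Set.mem_Ici.mpr (le_refl (0:ℝ)))
      (Set.mem_Ici.mpr hu) (show (0:ℝ) ≤ 3/4 by norm_num) (show (0:ℝ) ≤ 1/4 by norm_num)
      (show (3:ℝ)/4 + 1/4 = 1 by norm_num)
    have e : (3/4 : ℝ) • (0:ℝ) + (1/4 : ℝ) • u = u / 4 := by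
      simp [smul_eq_mul]; ring
    rw [e] at h
    simp only [smul_eq_mul, hΦ0, mul_zero, zero_add] at h
    linarith
  set s := ‖A xad - yδ‖ with hs
  set t := ‖A xad - A xdag‖ with htdef
  have hs0 : 0 ≤ s := norm_nonneg _
  have ht0 : 0 ≤ t := norm_nonneg _
  have hδ0 : (0:ℝ) ≤ δ := le_of_lt hδ
  -- minimality at x†
  have h1 : (1/2) * s ^ 2 + α * J xad ≤ (1/2) * δ ^ 2 + α * J xdag := by
    have hm := hmin xdag
    have hb : ‖A xdag - yδ‖ ^ 2 ≤ δ ^ 2 := pow_le_pow_left₀ (norm_nonneg _) hyδ 2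
    linarith
  -- triangle inequality
  have h2 : t ≤ s + δ := by
    have htr : ‖A xad - A xdag‖ ≤ ‖A xad - yδ‖ + ‖yδ - A xdag‖ :=
      norm_sub_le_norm_sub_add_norm_sub _ _ _
    have : ‖yδ - A xdag‖ = ‖A xdag - yδ‖ := norm_sub_rev _ _
    rw [this] at htr
    linarith
  -- Φ t ≤ Φ (s+δ) ≤ 4 Φ ((s+δ)/4) ≤ 4Ψα + (s+δ)²/(8α)
  have h3 : Φ t ≤ Φ (s + δ) := hΦmono (Set.mem_Ici.mpr ht0) (Set.mem_Ici.mpr (by positivity)) h2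
  have h4 : Φ (s + δ) ≤ 4 * Φ ((s + δ) / 4) := quarter _ (by positivity)
  have h5 : Φ ((s + δ) / 4) ≤ Ψ α + ((s + δ) / 4) ^ 2 / (2 * α) := key _ (by positivity)
  have h6 : J xdag - J xad ≤ Φ t := hvar xad
  have h7 : Φ t ≤ Ψ α + t ^ 2 / (2 * α) := key t ht0
  -- multiply the division bounds by α
  have h5' : α * Φ ((s + δ) / 4) ≤ α * Ψ α + (s + δ) ^ 2 / 32 := by
    have := mul_le_mul_of_nonneg_left h5 (le_of_lt hα)
    have e : α * (Ψ α + ((s + δ) / 4) ^ 2 / (2 * α)) = α * Ψ α + (s + δ) ^ 2 / 32 := by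
      field_simp
      ring
    linarith [e ▸ this]
  have h7' : α * Φ t ≤ α * Ψ α + t ^ 2 / 2 := by
    have := mul_le_mul_of_nonneg_left h7 (le_of_lt hα)
    have e : α * (Ψ α + t ^ 2 / (2 * α)) = α * Ψ α + t ^ 2 / 2 := by
      field_simp
    linarith [e ▸ this]
  -- derive s² bound
  have hsum : (s + δ) ^ 2 ≤ 2 * s ^ 2 + 2 * δ ^ 2 := by nlinarith [sq_nonneg (s - δ)]
  have hchain : α * (J xdag - J xad) ≤ 4 * (α * Ψ α) + (s + δ) ^ 2 / 8 := by
    have hΦm : α * Φ t ≤ α * Φ (s + δ) := mul_le_mul_of_nonneg_left h3 (le_of_lt hα)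
    have hΦm2 : α * Φ (s + δ) ≤ 4 * (α * Φ ((s + δ) / 4)) := by
      have := mul_le_mul_of_nonneg_left h4 (le_of_lt hα)
      linarith
    have hJm : α * (J xdag - J xad) ≤ α * Φ t := mul_le_mul_of_nonneg_left h6 (le_of_lt hα)
    linarith [h5']
  have hs2 : s ^ 2 ≤ 16 * (α * Ψ α) + 3 * δ ^ 2 := by
    have hl : s ^ 2 / 2 - δ ^ 2 / 2 ≤ α * (J xdag - J xad) := by
      have e : α * (J xdag - J xad) = α * J xdag - α * J xad := by ring
      rw [e]; linarith
    linarith [hchain, hsum]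
  have ht2 : t ^ 2 ≤ 32 * (α * Ψ α) + 8 * δ ^ 2 := by
    have : t ^ 2 ≤ (s + δ) ^ 2 := by nlinarith [h2, ht0]
    linarith [hsum, hs2]
  have hαΨ : 0 ≤ α * Ψ α := mul_nonneg (le_of_lt hα) hΨ0
  constructor
  · -- |J xdag - J xad| ≤ 32 (Ψα + δ²/α)
    rw [abs_le]
    have hK : (32 * (α * Ψ α) + 32 * δ ^ 2) / α = 32 * (Ψ α + δ ^ 2 / α) := by
      field_simp
    have hlo : α * (J xad - J xdag) ≤ δ ^ 2 / 2 := by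
      have e : α * (J xad - J xdag) = α * J xad - α * J xdag := by ring
      rw [e]
      linarith [h1, sq_nonneg s]
    have hup : α * (J xdag - J xad) ≤ α * Ψ α + t ^ 2 / 2 := by
      have hJm : α * (J xdag - J xad) ≤ α * Φ t :=
        mul_le_mul_of_nonneg_left h6 (le_of_lt hα)
      linarith [h7']
    constructor
    · rw [← hK, ← neg_div, div_le_iff₀ hα]
      have e2 : (J xdag - J xad) * α = -(α * (J xad - J xdag)) := by ring
      linarith [e2, hlo, hαΨ, sq_nonneg δ]
    · rw [← hK, le_div_iff₀ hα]
      have e3 : (J xdag - J xad) * α = α * (J xdag - J xad) := by ring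
      linarith [e3, hup, ht2, sq_nonneg δ]
  · nlinarith [ht2, sq_nonneg δ]
end

section
/- Tikhonov rate under the variational inequality (Theorem 2, part 3): suppose Φ : [0,∞) → [0,∞) is a concave index function with J(x†) − J(x) ≤ Φ(‖A x − A x†‖) for all x ∈ X, and let Ψ(α) := sup_{t ≥ 0} (Φ(t) − t²/(2α)), assumed finite for each α > 0. Then there exists a constant C > 0 (independent of α and δ) such that for all α > 0 and δ > 0: |J(x†) − (1/α) T_α^δ(x_α^δ)| ≤ C (Ψ(α) + δ²/α). -/
/-- Theorem 2, part 3 (Tikhonov rate): under the variational inequality with a concave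
index function `Φ` and with `Ψ(α) = sup_{t ≥ 0} (Φ(t) − t²/(2α))` (assumed finite), there
is a constant `C > 0` such that for all `α, δ > 0` and every minimizer `x_α^δ` of the
noisy Tikhonov functional `T_α^δ`,
`|J(x†) − (1/α) T_α^δ(x_α^δ)| ≤ C (Ψ(α) + δ²/α)`. -/
theorem stmt13 {X H : Type*} [NormedAddCommGroup X] [NormedSpace ℝ X] [CompleteSpace X]
    [NormedAddCommGroup H] [InnerProductSpace ℝ H] [CompleteSpace H]
    (A : X →L[ℝ] H) (J : X → ℝ) (hJ : ConvexOn ℝ Set.univ J) (xdag : X)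
    (Φ : ℝ → ℝ) (hΦconc : ConcaveOn ℝ (Set.Ici 0) Φ)
    (hΦmono : MonotoneOn Φ (Set.Ici 0)) (hΦnn : ∀ t ≥ 0, 0 ≤ Φ t) (hΦ0 : Φ 0 = 0)
    (hΦcont0 : ContinuousWithinAt Φ (Set.Ici 0) 0)
    (hvar : ∀ x : X, J xdag - J x ≤ Φ ‖A x - A xdag‖)
    (Ψ : ℝ → ℝ)
    (hbdd : ∀ α > 0, BddAbove ((fun t => Φ t - t ^ 2 / (2 * α)) '' Set.Ici 0))
    (hΨ : ∀ α > 0, Ψ α = sSup ((fun t => Φ t - t ^ 2 / (2 * α)) '' Set.Ici 0)) :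
    ∃ C > 0, ∀ α > 0, ∀ δ > 0, ∀ yδ : H, ‖A xdag - yδ‖ ≤ δ →
      ∀ xad : X,
        (∀ x, (1 / 2) * ‖A xad - yδ‖ ^ 2 + α * J xad ≤
          (1 / 2) * ‖A x - yδ‖ ^ 2 + α * J x) →
        |J xdag - (1 / α) * ((1 / 2) * ‖A xad - yδ‖ ^ 2 + α * J xad)| ≤
          C * (Ψ α + δ ^ 2 / α) := by
  refine ⟨2, by norm_num, ?_⟩
  intro α hα δ hδ yδ hd xad hmin
  set s := ‖A xad - yδ‖ with hsdef
  have hs0 : (0:ℝ) ≤ s := norm_nonneg _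
  have hδ0 : (0:ℝ) ≤ δ := hδ.le
  have hαne : α ≠ 0 := ne_of_gt hα
  -- Ψ bounds
  have hΨle : ∀ t : ℝ, 0 ≤ t → Φ t - t ^ 2 / (2 * α) ≤ Ψ α := by
    intro t ht
    rw [hΨ α hα]
    exact le_csSup (hbdd α hα) ⟨t, ht, rfl⟩
  have hΨ0 : 0 ≤ Ψ α := by
    have := hΨle 0 le_rfl
    simpa [hΦ0] using this
  -- subadditivity of Φ
  have hsub : ∀ a b : ℝ, 0 ≤ a → 0 ≤ b → Φ (a + b) ≤ Φ a + Φ b := by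
    intro a b ha hb
    rcases eq_or_lt_of_le (add_nonneg ha hb) with h | h
    · have ha0 : a = 0 := by linarith
      have hb0 : b = 0 := by linarith
      simp [ha0, hb0, hΦ0]
    · have hab : (0:ℝ) < a + b := h
      have key1 := hΦconc.2 (Set.mem_Ici.2 hab.le) (Set.mem_Ici.2 (le_refl (0:ℝ)))
        (div_nonneg ha hab.le) (div_nonneg hb hab.le)
        (by field_simp)
      have key2 := hΦconc.2 (Set.mem_Ici.2 hab.le) (Set.mem_Ici.2 (le_refl (0:ℝ)))
        (div_nonneg hb hab.le) (div_nonneg ha hab.le)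
        (by field_simp; ring)
      rw [smul_eq_mul, smul_eq_mul, smul_eq_mul, smul_eq_mul] at key1 key2
      have e1 : a / (a + b) * (a + b) + b / (a + b) * 0 = a := by field_simp; ring
      have e2 : b / (a + b) * (a + b) + a / (a + b) * 0 = b := by field_simp; ring
      rw [e1, hΦ0, mul_zero, add_zero] at key1
      rw [e2, hΦ0, mul_zero, add_zero] at key2
      have esum : a / (a + b) + b / (a + b) = 1 := by field_simp
      have efac : a / (a + b) * Φ (a + b) + b / (a + b) * Φ (a + b) = Φ (a + b) := by
        rw [← add_mul, esum, one_mul]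
      linarith
  -- variational inequality chain
  have hAA : ‖A xad - A xdag‖ ≤ s + δ := by
    have : A xad - A xdag = (A xad - yδ) + (yδ - A xdag) := by abel
    calc ‖A xad - A xdag‖ = ‖(A xad - yδ) + (yδ - A xdag)‖ := by rw [this]
      _ ≤ ‖A xad - yδ‖ + ‖yδ - A xdag‖ := norm_add_le _ _
      _ ≤ s + δ := add_le_add le_rfl (by rw [norm_sub_rev]; exact hd)
  have h1 : J xdag - J xad ≤ Φ (s + δ) :=
    (hvar xad).trans (hΦmono (Set.mem_Ici.2 (norm_nonneg _))
      (Set.mem_Ici.2 (add_nonneg hs0 hδ0)) hAA)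
  have h2 : Φ (s + δ) ≤ Φ s + Φ δ := hsub s δ hs0 hδ0
  have h3 := hΨle s hs0
  have h4 := hΨle δ hδ0
  -- value of the normalized Tikhonov functional
  have eq1 : (1 / α) * ((1 / 2) * s ^ 2 + α * J xad) = s ^ 2 / (2 * α) + J xad := by
    field_simp
  -- minimality at xdag
  have hsq : ‖A xdag - yδ‖ ^ 2 ≤ δ ^ 2 := by nlinarith [norm_nonneg (A xdag - yδ)]
  have hmin' := hmin xdag
  have hup : (1 / α) * ((1 / 2) * s ^ 2 + α * J xad) ≤ δ ^ 2 / (2 * α) + J xdag := by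
    have h5 : (1 / 2) * s ^ 2 + α * J xad ≤ (1 / 2) * δ ^ 2 + α * J xdag := by
      nlinarith
    have h6 : (1 / α) * ((1 / 2) * s ^ 2 + α * J xad) ≤
        (1 / α) * ((1 / 2) * δ ^ 2 + α * J xdag) :=
      mul_le_mul_of_nonneg_left h5 (by positivity)
    calc (1 / α) * ((1 / 2) * s ^ 2 + α * J xad)
        ≤ (1 / α) * ((1 / 2) * δ ^ 2 + α * J xdag) := h6
      _ = δ ^ 2 / (2 * α) + J xdag := by field_simp
  have hhalf : δ ^ 2 / (2 * α) ≤ δ ^ 2 / α :=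
    div_le_div_of_nonneg_left (by positivity) hα (by linarith)
  have hδα : (0:ℝ) ≤ δ ^ 2 / α := by positivity
  rw [abs_le]
  constructor
  · -- lower bound: -(2*(Ψα+δ²/α)) ≤ J xdag - t, from hup
    rw [eq1] at hup
    nlinarith
  · -- upper bound
    rw [eq1]
    nlinarith
end

section
/- KL inequality from a conditional stability estimate: let θ ∈ (0,2) and C > 0, and assume the conditional stability estimate ‖ι f₁ − ι f₂‖_X ≤ ‖A f₁ − A f₂‖_Y^θ holds for all f₁, f₂ ∈ Z with ‖f₁‖_Z ≤ C and ‖f₂‖_Z ≤ C. Let α > 0 and let x ∈ Z with ‖x‖_Z ≤ C, ‖x_α‖_Z ≤ C and x ≠ x_α. Then (T_α(x) − T_α(x_α))^{1 − θ/2} ≤ 2^{θ/2 − 1} · ⟨A*A(x − x†) + α x, x − x_α⟩_Z / ‖ι(x − x_α)‖_X. -/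
/-- KL inequality from a conditional stability estimate: if
`‖ι f₁ − ι f₂‖_X ≤ ‖A f₁ − A f₂‖_Y^θ` for all `f₁, f₂` of `Z`-norm at most `C`, and if
`x ≠ x_α` satisfies `‖x‖_Z ≤ C`, `‖x_α‖_Z ≤ C` (where `x_α` solves the normal equation),
then `(T_α(x) − T_α(x_α))^{1−θ/2} ≤ 2^{θ/2−1} ⟨A*A(x − x†) + α x, x − x_α⟩ / ‖ι(x − x_α)‖`. -/
theorem stmt16 {Z Y X : Type*} [NormedAddCommGroup Z] [InnerProductSpace ℝ Z]
    [CompleteSpace Z] [NormedAddCommGroup Y] [InnerProductSpace ℝ Y] [CompleteSpace Y]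
    [NormedAddCommGroup X] [NormedSpace ℝ X] [CompleteSpace X]
    (ι : Z →L[ℝ] X) (hι : Function.Injective ι)
    (A : Z →L[ℝ] Y) (xdag : Z)
    (θ C : ℝ) (hθ : θ ∈ Set.Ioo (0 : ℝ) 2) (hC : 0 < C)
    (hstab : ∀ f₁ f₂ : Z, ‖f₁‖ ≤ C → ‖f₂‖ ≤ C → ‖ι f₁ - ι f₂‖ ≤ ‖A f₁ - A f₂‖ ^ θ)
    (α : ℝ) (hα : 0 < α)
    (T : Z → ℝ) (hT : ∀ x, T x = (1 / 2) * ‖A x - A xdag‖ ^ 2 + (α / 2) * ‖x‖ ^ 2)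
    (xa : Z)
    (hnormal : (ContinuousLinearMap.adjoint A) (A xa) + α • xa =
      (ContinuousLinearMap.adjoint A) (A xdag))
    (x : Z) (hx : ‖x‖ ≤ C) (hxa : ‖xa‖ ≤ C) (hne : x ≠ xa) :
    (T x - T xa) ^ (1 - θ / 2) ≤
      (2 : ℝ) ^ (θ / 2 - 1) *
        (inner ℝ ((ContinuousLinearMap.adjoint A) (A (x - xdag)) + α • x) (x - xa) : ℝ) /
          ‖ι (x - xa)‖ := by
  obtain ⟨hθ0, hθ2⟩ := hθ
  set u := x - xa with hu
  have hu0 : u ≠ 0 := sub_ne_zero.mpr hne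
  have hunorm : (0:ℝ) < ‖u‖ := norm_pos_iff.mpr hu0
  have hιu : (0:ℝ) < ‖ι u‖ := by
    refine norm_pos_iff.mpr fun h => hu0 ?_
    have := hι (a₁ := u) (a₂ := 0) (by simpa using h)
    simpa using this
  -- cross term vanishes by normal equation
  have hcross : (inner ℝ (A xa - A xdag) (A u) : ℝ) + α * inner ℝ xa u = 0 := by
    have h := congrArg (fun w => (inner ℝ w u : ℝ)) hnormal
    simp only [inner_add_left, inner_smul_left, RCLike.conj_to_real,
      ContinuousLinearMap.adjoint_inner_left] at h
    have : (inner ℝ (A xa) (A u) : ℝ) + α * inner ℝ xa u = inner ℝ (A xdag) (A u) := h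
    rw [inner_sub_left]
    linarith
  -- the inner product in the goal equals ‖A u‖² + α ‖u‖²
  have hS : (inner ℝ ((ContinuousLinearMap.adjoint A) (A (x - xdag)) + α • x) u : ℝ)
      = ‖A u‖ ^ 2 + α * ‖u‖ ^ 2 := by
    have h1 : (inner ℝ ((ContinuousLinearMap.adjoint A) (A (x - xdag)) + α • x) u : ℝ)
        = inner ℝ (A x - A xdag) (A u) + α * inner ℝ x u := by
      simp only [inner_add_left, inner_sub_left, inner_smul_left, RCLike.conj_to_real,
        ContinuousLinearMap.adjoint_inner_left, map_sub]
    have h2 : (inner ℝ (A x - A xdag) (A u) : ℝ)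
        = inner ℝ (A u) (A u) + (inner ℝ (A xa - A xdag) (A u) : ℝ) := by
      have : A x - A xdag = A u + (A xa - A xdag) := by
        simp only [hu, map_sub]; abel
      rw [this, inner_add_left]
    have h3 : (inner ℝ x u : ℝ) = inner ℝ u u + inner ℝ xa u := by
      have : x = u + xa := by simp [hu]
      rw [this, inner_add_left]
    rw [h1, h2, h3, real_inner_self_eq_norm_sq, real_inner_self_eq_norm_sq]
    ring_nf
    linarith [hcross]
  -- D = T x - T xa = ½‖Au‖² + (α/2)‖u‖²
  have hD : T x - T xa = (1/2) * ‖A u‖ ^ 2 + (α/2) * ‖u‖ ^ 2 := by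
    have hAx : A x = A xa + A u := by simp [hu, map_sub]
    have hxu : x = xa + u := by simp [hu]
    have e1 : ‖A x - A xdag‖ ^ 2
        = ‖A xa - A xdag‖ ^ 2 + 2 * inner ℝ (A xa - A xdag) (A u) + ‖A u‖ ^ 2 := by
      have : A x - A xdag = (A xa - A xdag) + A u := by rw [hAx]; abel
      rw [this, norm_add_sq_real]
    have e2 : ‖x‖ ^ 2 = ‖xa‖ ^ 2 + 2 * inner ℝ xa u + ‖u‖ ^ 2 := by
      rw [hxu, norm_add_sq_real]
    rw [hT x, hT xa, e1, e2]
    ring_nf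
    nlinarith [hcross]
  set D := T x - T xa with hDdef
  have hDpos : 0 < D := by
    rw [hD]; positivity
  -- stability bound: ‖ι u‖ ≤ (2D)^{θ/2}
  have hstab2 : ‖ι u‖ ≤ (2 * D) ^ (θ / 2) := by
    have h1 : ‖ι u‖ ≤ ‖A u‖ ^ θ := by
      have := hstab x xa hx hxa
      simpa [hu, map_sub] using this
    have h2 : ‖A u‖ ^ θ = (‖A u‖ ^ 2) ^ (θ / 2) := by
      rw [← Real.rpow_natCast ‖A u‖ 2, ← Real.rpow_mul (norm_nonneg _)]
      congr 1; ring
    have h3 : ‖A u‖ ^ 2 ≤ 2 * D := by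
      rw [hD]; nlinarith [sq_nonneg ‖u‖]
    calc ‖ι u‖ ≤ ‖A u‖ ^ θ := h1
      _ = (‖A u‖ ^ 2) ^ (θ / 2) := h2
      _ ≤ (2 * D) ^ (θ / 2) := by
          exact Real.rpow_le_rpow (by positivity) h3 (by linarith)
  rw [hS, div_eq_mul_inv]
  have key : D ^ (1 - θ / 2) * ‖ι u‖ ≤ (2:ℝ) ^ (θ / 2 - 1) * (‖A u‖ ^ 2 + α * ‖u‖ ^ 2) := by
    have hsum : ‖A u‖ ^ 2 + α * ‖u‖ ^ 2 = 2 * D := by rw [hD]; ring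
    rw [hsum]
    calc D ^ (1 - θ / 2) * ‖ι u‖
        ≤ D ^ (1 - θ / 2) * (2 * D) ^ (θ / 2) := by
          exact mul_le_mul_of_nonneg_left hstab2 (Real.rpow_nonneg hDpos.le _)
      _ = (2:ℝ) ^ (θ / 2 - 1) * (2 * D) := by
          rw [Real.mul_rpow (by norm_num) hDpos.le]
          have hd : D ^ (1 - θ / 2) * D ^ (θ / 2) = D := by
            rw [← Real.rpow_add hDpos]; norm_num
          have h2 : (2:ℝ) ^ (θ / 2 - 1) * 2 = (2:ℝ) ^ (θ / 2) := by
            calc (2:ℝ) ^ (θ / 2 - 1) * 2 = (2:ℝ) ^ (θ / 2 - 1) * (2:ℝ) ^ (1:ℝ) := by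
                  rw [Real.rpow_one]
              _ = (2:ℝ) ^ (θ / 2 - 1 + 1) := (Real.rpow_add two_pos _ _).symm
              _ = (2:ℝ) ^ (θ / 2) := by ring_nf
          calc D ^ (1 - θ / 2) * ((2:ℝ) ^ (θ / 2) * D ^ (θ / 2))
              = (2:ℝ) ^ (θ / 2) * (D ^ (1 - θ / 2) * D ^ (θ / 2)) := by ring
            _ = (2:ℝ) ^ (θ / 2) * D := by rw [hd]
            _ = (2:ℝ) ^ (θ / 2 - 1) * (2 * D) := by rw [← h2]; ring
  calc D ^ (1 - θ / 2)
      = D ^ (1 - θ / 2) * ‖ι u‖ * ‖ι u‖⁻¹ := by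
        field_simp
    _ ≤ (2:ℝ) ^ (θ / 2 - 1) * (‖A u‖ ^ 2 + α * ‖u‖ ^ 2) * ‖ι u‖⁻¹ := by
        exact mul_le_mul_of_nonneg_right key (by positivity)
end

section
/- Convergence rate under conditional stability (Cheng–Yamamoto rate via the KL approach): let θ ∈ (0,2) and C > 0 with √(1 + ‖x†‖²_Z) ≤ C, and assume the conditional stability estimate ‖ι f₁ − ι f₂‖_X ≤ ‖A f₁ − A f₂‖_Y^θ for all f₁, f₂ ∈ Z with ‖f₁‖_Z ≤ C and ‖f₂‖_Z ≤ C. For δ > 0 let y^δ ∈ Y with ‖y − y^δ‖ ≤ δ, choose α := δ², and let x_α^δ be a minimizer over Z of (1/2)‖A x − y^δ‖²_Y + (α/2)‖x‖²_Z. Then ‖ι x_α^δ − ι x†‖_X ≤ ((1 + √(1 + ‖x†‖²_Z)) δ)^θ; in particular ‖ι x_α^δ − ι x†‖_X = O(δ^θ). -/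
/-- Cheng–Yamamoto convergence rate under conditional stability via the KL approach: with
the conditional stability estimate `‖ι f₁ − ι f₂‖_X ≤ ‖A f₁ − A f₂‖_Y^θ` on the ball
`‖·‖_Z ≤ C` where `√(1 + ‖x†‖²) ≤ C`, noise level `δ > 0`, the choice `α = δ²` and `x_α^δ`
a minimizer of `(1/2)‖A x − y^δ‖² + (α/2)‖x‖²`, one has
`‖ι x_α^δ − ι x†‖_X ≤ ((1 + √(1 + ‖x†‖²)) δ)^θ`, in particular a rate `O(δ^θ)`. -/
theorem stmt18 {Z Y X : Type*} [NormedAddCommGroup Z] [InnerProductSpace ℝ Z]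
    [CompleteSpace Z] [NormedAddCommGroup Y] [InnerProductSpace ℝ Y] [CompleteSpace Y]
    [NormedAddCommGroup X] [NormedSpace ℝ X] [CompleteSpace X]
    (ι : Z →L[ℝ] X) (hι : Function.Injective ι)
    (A : Z →L[ℝ] Y) (xdag : Z)
    (θ C : ℝ) (hθ : θ ∈ Set.Ioo (0 : ℝ) 2) (hC : 0 < C)
    (hCge : Real.sqrt (1 + ‖xdag‖ ^ 2) ≤ C)
    (hstab : ∀ f₁ f₂ : Z, ‖f₁‖ ≤ C → ‖f₂‖ ≤ C → ‖ι f₁ - ι f₂‖ ≤ ‖A f₁ - A f₂‖ ^ θ)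
    (δ : ℝ) (hδ : 0 < δ) (yδ : Y) (hnoise : ‖A xdag - yδ‖ ≤ δ)
    (xad : Z)
    (hmin : ∀ x : Z, (1 / 2) * ‖A xad - yδ‖ ^ 2 + (δ ^ 2 / 2) * ‖xad‖ ^ 2 ≤
      (1 / 2) * ‖A x - yδ‖ ^ 2 + (δ ^ 2 / 2) * ‖x‖ ^ 2) :
    ‖ι xad - ι xdag‖ ≤ ((1 + Real.sqrt (1 + ‖xdag‖ ^ 2)) * δ) ^ θ := by
  set s := Real.sqrt (1 + ‖xdag‖ ^ 2) with hs
  have hs0 : 0 ≤ 1 + ‖xdag‖ ^ 2 := by positivity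
  have hssq : s ^ 2 = 1 + ‖xdag‖ ^ 2 := Real.sq_sqrt hs0
  have h1 := hmin xdag
  have hres2 : ‖A xdag - yδ‖ ^ 2 ≤ δ ^ 2 := by
    have := pow_le_pow_left₀ (norm_nonneg _) hnoise 2
    linarith
  -- bound on ‖xad‖
  have hb2 : ‖xad‖ ^ 2 ≤ 1 + ‖xdag‖ ^ 2 := by
    nlinarith [sq_nonneg ‖A xad - yδ‖, mul_pos hδ hδ]
  have hxadle : ‖xad‖ ≤ s := by
    have : ‖xad‖ ^ 2 ≤ s ^ 2 := by rw [hssq]; exact hb2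
    exact (pow_le_pow_iff_left₀ (norm_nonneg _) (Real.sqrt_nonneg _) (by norm_num)).mp this
  have hxdagle : ‖xdag‖ ≤ s := by
    have : ‖xdag‖ ^ 2 ≤ s ^ 2 := by rw [hssq]; nlinarith
    exact (pow_le_pow_iff_left₀ (norm_nonneg _) (Real.sqrt_nonneg _) (by norm_num)).mp this
  -- bound on residual
  have hres : ‖A xad - yδ‖ ≤ s * δ := by
    have h2 : ‖A xad - yδ‖ ^ 2 ≤ (s * δ) ^ 2 := by
      have hxd : 0 ≤ ‖xdag‖ ^ 2 := sq_nonneg _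
      nlinarith [sq_nonneg ‖xad‖]
    exact (pow_le_pow_iff_left₀ (norm_nonneg _)
      (mul_nonneg (Real.sqrt_nonneg _) hδ.le) (by norm_num)).mp h2
  have hAdiff : ‖A xad - A xdag‖ ≤ (1 + s) * δ := by
    calc ‖A xad - A xdag‖ = ‖(A xad - yδ) + (yδ - A xdag)‖ := by rw [sub_add_sub_cancel]
      _ ≤ ‖A xad - yδ‖ + ‖yδ - A xdag‖ := norm_add_le _ _
      _ = ‖A xad - yδ‖ + ‖A xdag - yδ‖ := by rw [norm_sub_rev yδ (A xdag)]
      _ ≤ s * δ + δ := add_le_add hres hnoise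
      _ = (1 + s) * δ := by ring
  have hkey := hstab xad xdag (hxadle.trans hCge) (hxdagle.trans hCge)
  refine hkey.trans ?_
  rw [show (1 + s) * δ = (1 + s) * δ by rfl]
  exact Real.rpow_le_rpow (norm_nonneg _) hAdiff hθ.1.le
end

section
/- KL inequality for classical Tikhonov regularization under a source condition on the difference: let μ > 0 and let (A*A)^μ denote the fractional power of the positive self-adjoint operator A*A given by the continuous functional calculus. Suppose x ∈ X and w ∈ X satisfy x − x_α = (A*A)^μ w with ‖w‖ ≤ 1, where x_α satisfies the normal equation A*A x_α + α x_α = A*A x†. Then (T_α(x) − T_α(x_α))^{(μ+1)/(2μ+1)} ≤ ‖A*(A x − A x†) + α x‖. -/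
open Filter Topology

theorem dyadic_pow_interp (K : ℝ → ℝ) (hK : ∀ t, 0 ≤ t → 0 < K t)
    (hmid : ∀ a b : ℝ, 0 ≤ a → 0 ≤ b → K ((a + b) / 2) ^ 2 ≤ K a * K b)
    (b : ℝ) (hb : 0 < b) :
    ∀ n k : ℕ, k ≤ 2 ^ n →
      K (((k : ℝ) / 2 ^ n) * b) ^ (2 ^ n) ≤ K 0 ^ (2 ^ n - k) * K b ^ k := by
  intro n
  induction n with
  | zero =>
    intro k hk
    interval_cases k
    · norm_num
    · norm_num
  | succ n ih =>
    intro k hk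
    have h2n : (0:ℝ) < 2 ^ n := by positivity
    have hKnn : ∀ t : ℝ, 0 ≤ t → 0 ≤ K t := fun t ht => (hK t ht).le
    rcases Nat.even_or_odd k with ⟨m, hm⟩ | ⟨m, hm⟩
    · -- k = m + m
      have hm2 : m ≤ 2 ^ n := by
        have : 2 ^ (n+1) = 2 ^ n + 2 ^ n := by ring
        omega
      have harg : ((k : ℝ) / 2 ^ (n+1)) * b = ((m : ℝ) / 2 ^ n) * b := by
        subst hm; push_cast; field_simp; ring
      have hpow : (2:ℕ) ^ (n+1) = 2 ^ n * 2 := by ring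
      rw [harg, hpow, pow_mul]
      calc (K (((m:ℝ) / 2 ^ n) * b) ^ 2 ^ n) ^ 2
          ≤ (K 0 ^ (2 ^ n - m) * K b ^ m) ^ 2 := by
            apply pow_le_pow_left₀ (pow_nonneg (hKnn _ (by positivity)) _) (ih m hm2)
        _ = K 0 ^ (2 ^ n * 2 - k) * K b ^ k := by
            rw [mul_pow, ← pow_mul, ← pow_mul]
            congr 2 <;> omega
    · -- k = 2*m+1
      have hm2 : m + 1 ≤ 2 ^ n := by
        have : 2 ^ (n+1) = 2 ^ n + 2 ^ n := by ring
        omega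
      have hm1 : m ≤ 2 ^ n := by omega
      have ha1 : (0:ℝ) ≤ ((m : ℝ) / 2 ^ n) * b := by positivity
      have ha2 : (0:ℝ) ≤ (((m:ℝ) + 1) / 2 ^ n) * b := by positivity
      have harg : ((k : ℝ) / 2 ^ (n+1)) * b
          = ((((m : ℝ) / 2 ^ n) * b) + ((((m:ℝ) + 1) / 2 ^ n) * b)) / 2 := by
        subst hm; push_cast; field_simp; ring
      have hmidk := hmid _ _ ha1 ha2
      have hpow : (2:ℕ) ^ (n+1) = 2 * 2 ^ n := by ring
      rw [harg, hpow, pow_mul]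
      have ih1 := ih m hm1
      have ih2 := ih (m+1) hm2
      have cast1 : ((m + 1 : ℕ) : ℝ) = (m : ℝ) + 1 := by push_cast; ring
      rw [cast1] at ih2
      calc (K ((((m:ℝ) / 2 ^ n) * b + (((m:ℝ) + 1) / 2 ^ n) * b) / 2) ^ 2) ^ 2 ^ n
          ≤ (K (((m:ℝ) / 2 ^ n) * b) * K ((((m:ℝ) + 1) / 2 ^ n) * b)) ^ 2 ^ n := by
            apply pow_le_pow_left₀ (pow_nonneg (hKnn _ (by positivity)) _) hmidk
        _ = K (((m:ℝ) / 2 ^ n) * b) ^ 2 ^ n * K ((((m:ℝ) + 1) / 2 ^ n) * b) ^ 2 ^ n := by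
            rw [mul_pow]
        _ ≤ (K 0 ^ (2 ^ n - m) * K b ^ m) * (K 0 ^ (2 ^ n - (m+1)) * K b ^ (m+1)) := by
            apply mul_le_mul ih1 ih2 (pow_nonneg (hKnn _ ha2) _)
              (mul_nonneg (pow_nonneg (hKnn 0 le_rfl) _) (pow_nonneg (hKnn b hb.le) _))
        _ = K 0 ^ (2 * 2 ^ n - k) * K b ^ k := by
            rw [mul_mul_mul_comm, ← pow_add, ← pow_add]
            congr 2 <;> omega

theorem midpoint_interp (J : ℝ → ℝ) (hJ : ∀ t, 0 ≤ t → 0 ≤ J t)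
    (hmid : ∀ a b : ℝ, 0 ≤ a → 0 ≤ b → J ((a + b) / 2) ^ 2 ≤ J a * J b)
    (hcont : ContinuousOn J (Set.Ioi 0))
    (b c : ℝ) (hb : 0 < b) (hc0 : 0 < c) (hc1 : c < 1) :
    J (c * b) ≤ J 0 ^ (1 - c) * J b ^ c := by
  suffices key : ∀ ε : ℝ, 0 < ε → J (c * b) ≤ (J 0 + ε) ^ (1 - c) * (J b + ε) ^ c by
    have h1 : ContinuousAt (fun x : ℝ => x ^ (1 - c)) (J 0) :=
      Real.continuousAt_rpow_const (J 0) (1 - c) (Or.inr (by linarith))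
    have h2 : ContinuousAt (fun x : ℝ => x ^ c) (J b) :=
      Real.continuousAt_rpow_const (J b) c (Or.inr (by linarith))
    have hadd0 : Filter.Tendsto (fun ε : ℝ => J 0 + ε) (nhdsWithin 0 (Set.Ioi 0)) (nhds (J 0)) := by
      have : Filter.Tendsto (fun ε : ℝ => J 0 + ε) (nhds 0) (nhds (J 0 + 0)) :=
        (continuous_const.add continuous_id).tendsto 0
      rw [add_zero] at this
      exact this.mono_left nhdsWithin_le_nhds
    have haddb : Filter.Tendsto (fun ε : ℝ => J b + ε) (nhdsWithin 0 (Set.Ioi 0)) (nhds (J b)) := by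
      have : Filter.Tendsto (fun ε : ℝ => J b + ε) (nhds 0) (nhds (J b + 0)) :=
        (continuous_const.add continuous_id).tendsto 0
      rw [add_zero] at this
      exact this.mono_left nhdsWithin_le_nhds
    have hten : Filter.Tendsto (fun ε : ℝ => (J 0 + ε) ^ (1 - c) * (J b + ε) ^ c)
        (nhdsWithin 0 (Set.Ioi 0)) (nhds (J 0 ^ (1 - c) * J b ^ c)) :=
      ((h1.tendsto.comp hadd0).mul (h2.tendsto.comp haddb))
    exact ge_of_tendsto hten (eventually_mem_nhdsWithin.mono (fun ε hε => key ε hε))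
  intro ε hε
  set K : ℝ → ℝ := fun t => J t + ε with hKdef
  have hK : ∀ t, 0 ≤ t → 0 < K t := fun t ht => by
    have := hJ t ht; simp only [hKdef]; linarith
  have hKnn : ∀ t, 0 ≤ t → 0 ≤ K t := fun t ht => (hK t ht).le
  have hmidK : ∀ a b : ℝ, 0 ≤ a → 0 ≤ b → K ((a + b) / 2) ^ 2 ≤ K a * K b := by
    intro a b ha hb
    have h1 := hmid a b ha hb
    have hm : 0 ≤ J ((a + b) / 2) := hJ _ (by linarith)
    have hja := hJ a ha
    have hjb := hJ b hb
    have hAM : 2 * J ((a + b) / 2) ≤ J a + J b := by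
      nlinarith [sq_nonneg (J a - J b), sq_nonneg (J a + J b - 2 * J ((a+b)/2))]
    simp only [hKdef]
    nlinarith
  have hKcont : ContinuousOn K (Set.Ioi 0) := hcont.add continuousOn_const
  -- dyadic rpow bound
  have dyr : ∀ n k : ℕ, k ≤ 2 ^ n →
      K (((k : ℝ) / 2 ^ n) * b) ≤ K 0 ^ (1 - (k : ℝ) / 2 ^ n) * K b ^ ((k : ℝ) / 2 ^ n) := by
    intro n k hk
    have h := dyadic_pow_interp K hK hmidK b hb n k hk
    have hN : (0:ℝ) < 2 ^ n := by positivity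
    have hq0 : (0:ℝ) ≤ (k : ℝ) / 2 ^ n := by positivity
    have harg : (0:ℝ) ≤ ((k : ℝ) / 2 ^ n) * b := by positivity
    have hKq := hK _ harg
    have hK0 := hK 0 le_rfl
    have hKb := hK b hb.le
    -- take logs
    have hlog : (2 ^ n : ℝ) * Real.log (K (((k : ℝ) / 2 ^ n) * b)) ≤
        ((2 ^ n - k : ℕ) : ℝ) * Real.log (K 0) + (k : ℝ) * Real.log (K b) := by
      have hl := Real.log_le_log (by positivity) h
      rw [Real.log_pow, Real.log_mul (by positivity) (by positivity),
        Real.log_pow, Real.log_pow] at hl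
      push_cast at hl ⊢
      linarith
    have hdiv : Real.log (K (((k : ℝ) / 2 ^ n) * b)) ≤
        (1 - (k : ℝ) / 2 ^ n) * Real.log (K 0) + ((k : ℝ) / 2 ^ n) * Real.log (K b) := by
      have hcast : ((2 ^ n - k : ℕ) : ℝ) = 2 ^ n - (k : ℝ) := by
        rw [Nat.cast_sub hk]; push_cast; ring
      rw [hcast] at hlog
      have h2 : (1 - (k : ℝ) / 2 ^ n) * Real.log (K 0) + ((k : ℝ) / 2 ^ n) * Real.log (K b)
          = ((2 ^ n - (k : ℝ)) * Real.log (K 0) + (k : ℝ) * Real.log (K b)) / 2 ^ n := by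
        field_simp
      rw [h2, le_div_iff₀ hN]
      have h3 : Real.log (K (((k : ℝ) / 2 ^ n) * b)) * 2 ^ n
          = (2 ^ n : ℝ) * Real.log (K (((k : ℝ) / 2 ^ n) * b)) := mul_comm _ _
      linarith [hlog, h3]
    calc K (((k : ℝ) / 2 ^ n) * b) = Real.exp (Real.log (K (((k : ℝ) / 2 ^ n) * b))) :=
          (Real.exp_log hKq).symm
      _ ≤ Real.exp ((1 - (k : ℝ) / 2 ^ n) * Real.log (K 0) + ((k : ℝ) / 2 ^ n) * Real.log (K b)) :=
          Real.exp_le_exp.mpr hdiv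
      _ = K 0 ^ (1 - (k : ℝ) / 2 ^ n) * K b ^ ((k : ℝ) / 2 ^ n) := by
          rw [Real.exp_add, Real.rpow_def_of_pos hK0, Real.rpow_def_of_pos hKb,
            mul_comm (Real.log (K 0)), mul_comm (Real.log (K b))]
  -- dyadic approximation sequence
  set q : ℕ → ℝ := fun n => ((Nat.floor (c * 2 ^ n) : ℝ)) / 2 ^ n with hqdef
  have hk_le : ∀ n : ℕ, Nat.floor (c * 2 ^ n) ≤ 2 ^ n := by
    intro n
    have h1 : c * 2 ^ n ≤ ((2 ^ n : ℕ) : ℝ) := by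
      push_cast
      nlinarith [pow_pos (show (0:ℝ) < 2 by norm_num) n]
    calc Nat.floor (c * 2 ^ n) ≤ Nat.floor ((2 ^ n : ℕ) : ℝ) := Nat.floor_mono h1
      _ = 2 ^ n := Nat.floor_natCast _
  have hq_le : ∀ n, q n ≤ c := by
    intro n
    have hN : (0:ℝ) < 2 ^ n := by positivity
    have := Nat.floor_le (show 0 ≤ c * 2 ^ n by positivity)
    rw [hqdef]
    rw [div_le_iff₀ hN]
    linarith
  have hq_lb : ∀ n, c - (1/2 : ℝ) ^ n ≤ q n := by
    intro n
    have hN : (0:ℝ) < 2 ^ n := by positivity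
    have := Nat.lt_floor_add_one (c * 2 ^ n)
    rw [hqdef]
    rw [le_div_iff₀ hN]
    have h2 : ((1:ℝ)/2) ^ n * 2 ^ n = 1 := by
      rw [← mul_pow]; norm_num
    nlinarith
  have hhalf : Filter.Tendsto (fun n : ℕ => ((1:ℝ)/2) ^ n) Filter.atTop (nhds 0) :=
    tendsto_pow_atTop_nhds_zero_of_lt_one (by norm_num) (by norm_num)
  have hq_tend : Filter.Tendsto q Filter.atTop (nhds c) := by
    have hlo : Filter.Tendsto (fun n : ℕ => c - ((1:ℝ)/2) ^ n) Filter.atTop (nhds c) := by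
      have : Filter.Tendsto (fun n : ℕ => c - ((1:ℝ)/2) ^ n) Filter.atTop (nhds (c - 0)) :=
        tendsto_const_nhds.sub hhalf
      rwa [sub_zero] at this
    exact tendsto_of_tendsto_of_tendsto_of_le_of_le hlo tendsto_const_nhds hq_lb hq_le
  -- LHS limit
  have hmem : c * b ∈ Set.Ioi (0:ℝ) := by
    simp only [Set.mem_Ioi]; positivity
  have hLHS : Filter.Tendsto (fun n => K (q n * b)) Filter.atTop (nhds (K (c * b))) := by
    have hqb : Filter.Tendsto (fun n => q n * b) Filter.atTop (nhds (c * b)) :=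
      hq_tend.mul_const b
    have hev : ∀ᶠ n in Filter.atTop, q n * b ∈ Set.Ioi (0:ℝ) := by
      have hev1 : ∀ᶠ n in Filter.atTop, ((1:ℝ)/2) ^ n < c :=
        hhalf.eventually_lt_const hc0
      filter_upwards [hev1] with n hn
      have := hq_lb n
      have hqpos : 0 < q n := by linarith
      simp only [Set.mem_Ioi]
      positivity
    exact ((hKcont.continuousWithinAt hmem).tendsto.comp
      (tendsto_nhdsWithin_iff.mpr ⟨hqb, hev⟩))
  -- RHS limit
  have hK0 := hK 0 le_rfl
  have hKb := hK b hb.le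
  have hRHS : Filter.Tendsto (fun n => K 0 ^ (1 - q n) * K b ^ (q n)) Filter.atTop
      (nhds (K 0 ^ (1 - c) * K b ^ c)) := by
    have t1 : Filter.Tendsto (fun n => 1 - q n) Filter.atTop (nhds (1 - c)) :=
      tendsto_const_nhds.sub hq_tend
    have c1 : ContinuousAt (fun y : ℝ => K 0 ^ y) (1 - c) :=
      Real.continuousAt_const_rpow (ne_of_gt hK0)
    have c2 : ContinuousAt (fun y : ℝ => K b ^ y) c :=
      Real.continuousAt_const_rpow (ne_of_gt hKb)
    exact (c1.tendsto.comp t1).mul (c2.tendsto.comp hq_tend)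
  have hle : K (c * b) ≤ K 0 ^ (1 - c) * K b ^ c := by
    refine le_of_tendsto_of_tendsto' hLHS hRHS (fun n => ?_)
    have := dyr n (Nat.floor (c * 2 ^ n)) (hk_le n)
    simpa [hqdef] using this
  have : J (c * b) ≤ K (c * b) := by simp only [hKdef]; linarith
  calc J (c * b) ≤ K 0 ^ (1 - c) * K b ^ c := le_trans this hle
    _ = (J 0 + ε) ^ (1 - c) * (J b + ε) ^ c := rfl

open RealInnerProductSpace

/-- KL inequality for classical Tikhonov regularization under a source condition on the
difference. The family `fpow : ℝ → (X →L[ℝ] X)` stands for the fractional powers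
`μ ↦ (A*A)^μ` of the positive self-adjoint operator `A*A` given by the continuous
functional calculus; it is characterized (uniquely) by the listed properties:
`(A*A)^0 = 1`, `(A*A)^1 = A*A`, the semigroup law `(A*A)^{μ+ν} = (A*A)^μ (A*A)^ν` for
`μ, ν ≥ 0`, positivity (hence self-adjointness) of each `(A*A)^μ`, and norm-continuity of
`μ ↦ (A*A)^μ` on `(0,∞)`. If `x − x_α = (A*A)^μ w` with `‖w‖ ≤ 1`, where `x_α` solves the
normal equation `A*A x_α + α x_α = A*A x†`, then
`(T_α(x) − T_α(x_α))^{(μ+1)/(2μ+1)} ≤ ‖A*(A x − A x†) + α x‖`. -/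
theorem stmt19 {X Y : Type*} [NormedAddCommGroup X] [InnerProductSpace ℝ X]
    [CompleteSpace X] [NormedAddCommGroup Y] [InnerProductSpace ℝ Y] [CompleteSpace Y]
    (A : X →L[ℝ] Y) (xdag : X) (α : ℝ) (hα : 0 < α)
    (T : X → ℝ) (hT : ∀ x, T x = (1 / 2) * ‖A x - A xdag‖ ^ 2 + (α / 2) * ‖x‖ ^ 2)
    (xa : X)
    (hnormal : (ContinuousLinearMap.adjoint A) (A xa) + α • xa =
      (ContinuousLinearMap.adjoint A) (A xdag))
    (fpow : ℝ → X →L[ℝ] X)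
    (hf0 : fpow 0 = 1)
    (hf1 : fpow 1 = (ContinuousLinearMap.adjoint A).comp A)
    (hfadd : ∀ μ ν : ℝ, 0 ≤ μ → 0 ≤ ν → fpow (μ + ν) = (fpow μ).comp (fpow ν))
    (hfpos : ∀ μ : ℝ, 0 ≤ μ → (fpow μ).IsPositive)
    (hfcont : ContinuousOn fpow (Set.Ioi 0))
    (μ : ℝ) (hμ : 0 < μ)
    (x w : X) (hw : ‖w‖ ≤ 1) (hxw : x - xa = fpow μ w) :
    (T x - T xa) ^ ((μ + 1) / (2 * μ + 1)) ≤
      ‖(ContinuousLinearMap.adjoint A) (A x - A xdag) + α • x‖ := by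
  have hμ1 : (0:ℝ) < μ + 1 := by linarith
  have h2μ1 : (0:ℝ) < 2 * μ + 1 := by linarith
  set e : X := x - xa with he
  set g : X := (ContinuousLinearMap.adjoint A) (A x - A xdag) + α • x with hgdef
  -- self-adjointness of fpow t
  have hsa : ∀ t : ℝ, 0 ≤ t → ∀ u v : X, ⟪fpow t u, v⟫ = ⟪u, fpow t v⟫ := by
    intro t ht u v
    have h2 : ContinuousLinearMap.adjoint (fpow t) = fpow t :=
      ContinuousLinearMap.isSelfAdjoint_iff'.mp (hfpos t ht).isSelfAdjoint
    rw [← h2, ContinuousLinearMap.adjoint_inner_left, h2]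
  have hinn : ∀ t : ℝ, 0 ≤ t → ∀ u : X, 0 ≤ ⟪fpow t u, u⟫ := by
    intro t ht u
    have := (hfpos t ht).inner_nonneg_left u
    simpa using this
  -- normal equation consequences
  have hz : (ContinuousLinearMap.adjoint A) (A xa - A xdag) + α • xa = 0 := by
    rw [map_sub]
    have h7 : (ContinuousLinearMap.adjoint A) (A xa) - (ContinuousLinearMap.adjoint A) (A xdag)
        + α • xa = ((ContinuousLinearMap.adjoint A) (A xa) + α • xa)
          - (ContinuousLinearMap.adjoint A) (A xdag) := by abel
    rw [h7, hnormal, sub_self]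
  have hge : g = (ContinuousLinearMap.adjoint A) (A e) + α • e := by
    have h8 : g = (ContinuousLinearMap.adjoint A) (A e) + α • e +
        ((ContinuousLinearMap.adjoint A) (A xa - A xdag) + α • xa) := by
      rw [hgdef, he]
      simp only [map_sub, smul_sub]
      abel
    rw [h8, hz, add_zero]
  have hgi : ⟪g, e⟫ = ‖A e‖ ^ 2 + α * ‖e‖ ^ 2 := by
    rw [hge, inner_add_left, real_inner_smul_left,
      ContinuousLinearMap.adjoint_inner_left, real_inner_self_eq_norm_sq,
      real_inner_self_eq_norm_sq]
  have hs0 : 0 ≤ ⟪g, e⟫ := by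
    rw [hgi]; positivity
  -- T difference
  have hTd : T x - T xa = ⟪g, e⟫ / 2 := by
    have hx1 : A x - A xdag = A e + (A xa - A xdag) := by
      rw [he, map_sub]; abel
    have hx2 : x = e + xa := by rw [he]; abel
    have hcross : ⟪A e, A xa - A xdag⟫ + α * ⟪e, xa⟫ = 0 := by
      have h1 : ⟪A e, A xa - A xdag⟫ = ⟪e, (ContinuousLinearMap.adjoint A) (A xa - A xdag)⟫ :=
        (ContinuousLinearMap.adjoint_inner_right A e _).symm
      have h2 : α * ⟪e, xa⟫ = ⟪e, α • xa⟫ := (real_inner_smul_right e xa α).symm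
      rw [h1, h2, ← inner_add_right, hz, inner_zero_right]
    rw [hT x, hT xa, hx1]
    rw [show ‖x‖ = ‖e + xa‖ from by rw [← hx2]]
    rw [norm_add_sq_real, norm_add_sq_real, hgi]
    linarith [hcross]
  -- the moment function J
  set J : ℝ → ℝ := fun t => ⟪fpow t w, w⟫ with hJdef
  have hJnn : ∀ t, 0 ≤ t → 0 ≤ J t := fun t ht => hinn t ht w
  have hnormsq : ∀ t : ℝ, 0 ≤ t → ‖fpow t w‖ ^ 2 = J (t + t) := by
    intro t ht
    simp only [hJdef]
    rw [hfadd t t ht ht, ContinuousLinearMap.comp_apply, hsa t ht,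
      real_inner_self_eq_norm_sq]
  have hmidJ : ∀ a b : ℝ, 0 ≤ a → 0 ≤ b → J ((a + b) / 2) ^ 2 ≤ J a * J b := by
    intro a b ha hb
    have h1 : J ((a + b) / 2) = ⟪fpow (b / 2) w, fpow (a / 2) w⟫ := by
      simp only [hJdef]
      rw [show (a + b) / 2 = a / 2 + b / 2 from by ring,
        hfadd (a / 2) (b / 2) (by linarith) (by linarith),
        ContinuousLinearMap.comp_apply, hsa (a / 2) (by linarith)]
    have h2 : J ((a + b) / 2) ≤ ‖fpow (b / 2) w‖ * ‖fpow (a / 2) w‖ :=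
      h1 ▸ real_inner_le_norm _ _
    have h3 : J ((a + b) / 2) ^ 2 ≤ (‖fpow (b / 2) w‖ * ‖fpow (a / 2) w‖) ^ 2 :=
      pow_le_pow_left₀ (hJnn _ (by linarith)) h2 2
    have h4 : (‖fpow (b / 2) w‖ * ‖fpow (a / 2) w‖) ^ 2
        = ‖fpow (b / 2) w‖ ^ 2 * ‖fpow (a / 2) w‖ ^ 2 := mul_pow _ _ _
    rw [h4, hnormsq (b / 2) (by linarith), hnormsq (a / 2) (by linarith),
      show b / 2 + b / 2 = b from by ring, show a / 2 + a / 2 = a from by ring] at h3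
    linarith [h3]
  have hJcont : ContinuousOn J (Set.Ioi 0) := by
    have h1 : ContinuousOn (fun t => fpow t w) (Set.Ioi (0:ℝ)) :=
      (ContinuousLinearMap.apply ℝ X w).continuous.comp_continuousOn hfcont
    exact h1.inner continuousOn_const
  -- special values
  have hJ0 : J 0 ≤ 1 := by
    simp only [hJdef, hf0, ContinuousLinearMap.one_apply, real_inner_self_eq_norm_sq]
    nlinarith [norm_nonneg w]
  have hJ2μ : J (2 * μ) = ‖e‖ ^ 2 := by
    rw [hxw, hnormsq μ hμ.le, show μ + μ = 2 * μ from by ring]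
  have hu : (ContinuousLinearMap.adjoint A) (A e) = fpow (1 + μ) w := by
    rw [hxw]
    rw [show (ContinuousLinearMap.adjoint A) (A (fpow μ w))
        = ((ContinuousLinearMap.adjoint A).comp A) (fpow μ w) from rfl,
      ← hf1, ← ContinuousLinearMap.comp_apply, ← hfadd 1 μ (by norm_num) hμ.le]
  have hgw : g = fpow (1 + μ) w + α • fpow μ w := by
    rw [hge, hu, hxw]
  have hJle : J (2 * μ + 2) ≤ ‖g‖ ^ 2 := by
    have hnorm : ‖g‖ ^ 2 = ‖fpow (1 + μ) w‖ ^ 2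
        + 2 * ⟪fpow (1 + μ) w, α • fpow μ w⟫ + ‖α • fpow μ w‖ ^ 2 := by
      rw [hgw, norm_add_sq_real]
    have h1 : ‖fpow (1 + μ) w‖ ^ 2 = J (2 * μ + 2) := by
      rw [hnormsq (1 + μ) (by linarith), show (1 + μ) + (1 + μ) = 2 * μ + 2 from by ring]
    have h2 : 0 ≤ ⟪fpow (1 + μ) w, α • fpow μ w⟫ := by
      rw [real_inner_smul_right, ← hsa μ hμ.le,
        show fpow μ (fpow (1 + μ) w) = fpow (μ + (1 + μ)) w from by
          rw [hfadd μ (1 + μ) hμ.le (by linarith)]; rfl]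
      exact mul_nonneg hα.le (hinn (μ + (1 + μ)) (by linarith) w)
    linarith [hnorm, h1, h2, sq_nonneg ‖α • fpow μ w‖]
  -- interpolation
  have hne1 : μ + 1 ≠ 0 := ne_of_gt hμ1
  have hne2 : 2 * μ + 1 ≠ 0 := ne_of_gt h2μ1
  set c : ℝ := μ / (μ + 1) with hcdef
  have hc0 : 0 < c := by positivity
  have hc1 : c < 1 := by rw [hcdef, div_lt_one hμ1]; linarith
  have hinterp := midpoint_interp J hJnn hmidJ hJcont (2 * μ + 2) c (by linarith) hc0 hc1
  rw [show c * (2 * μ + 2) = 2 * μ from by rw [hcdef]; field_simp] at hinterp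
  have hb1 : J 0 ^ (1 - c) ≤ 1 :=
    Real.rpow_le_one (hJnn 0 le_rfl) hJ0 (by linarith)
  have hb2 : J (2 * μ + 2) ^ c ≤ (‖g‖ ^ 2 : ℝ) ^ c :=
    Real.rpow_le_rpow (hJnn _ (by linarith)) hJle hc0.le
  have hb3 : ((‖g‖ ^ 2 : ℝ)) ^ c = (‖g‖ ^ c) ^ 2 := by
    rw [← Real.rpow_natCast ‖g‖ 2, ← Real.rpow_natCast (‖g‖ ^ c) 2,
      ← Real.rpow_mul (norm_nonneg g), ← Real.rpow_mul (norm_nonneg g), mul_comm]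
  have he_le : ‖e‖ ≤ ‖g‖ ^ c := by
    have h6 : ‖e‖ ^ 2 ≤ (‖g‖ ^ c) ^ 2 := by
      calc ‖e‖ ^ 2 = J (2 * μ) := hJ2μ.symm
        _ ≤ J 0 ^ (1 - c) * J (2 * μ + 2) ^ c := hinterp
        _ ≤ 1 * ((‖g‖ ^ 2 : ℝ) ^ c) := by
            apply mul_le_mul hb1 hb2 (Real.rpow_nonneg (hJnn _ (by linarith)) c) zero_le_one
        _ = (‖g‖ ^ c) ^ 2 := by rw [one_mul, hb3]
    exact (pow_le_pow_iff_left₀ (norm_nonneg e) (Real.rpow_nonneg (norm_nonneg g) c)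
      two_ne_zero).mp h6
  have hse : ⟪g, e⟫ ≤ ‖g‖ ^ (1 + c) := by
    calc ⟪g, e⟫ ≤ ‖g‖ * ‖e‖ := real_inner_le_norm g e
      _ ≤ ‖g‖ * ‖g‖ ^ c := mul_le_mul_of_nonneg_left he_le (norm_nonneg g)
      _ = ‖g‖ ^ (1 + c) := by
          rw [Real.rpow_add' (norm_nonneg g) (by positivity), Real.rpow_one]
  rw [hTd]
  have hθ0 : (0:ℝ) ≤ (μ + 1) / (2 * μ + 1) := by positivity
  calc (⟪g, e⟫ / 2) ^ ((μ + 1) / (2 * μ + 1)) ≤ (⟪g, e⟫) ^ ((μ + 1) / (2 * μ + 1)) :=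
        Real.rpow_le_rpow (by linarith) (by linarith) hθ0
    _ ≤ (‖g‖ ^ (1 + c)) ^ ((μ + 1) / (2 * μ + 1)) :=
        Real.rpow_le_rpow hs0 hse hθ0
    _ = ‖g‖ ^ ((1 + c) * ((μ + 1) / (2 * μ + 1))) :=
        (Real.rpow_mul (norm_nonneg g) _ _).symm
    _ = ‖g‖ := by
        rw [show (1 + c) * ((μ + 1) / (2 * μ + 1)) = 1 from by
          rw [hcdef]; field_simp; ring, Real.rpow_one]
end
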